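/- arXiv:2002.09001 — 3 statements merged into one kernel-verified Lean document; each statement's English description precedes it below -/
import Mathlib

section
/- (Dichotomy for collections of caps.) For every A > 0 there exist α > 0 (depending only on d), a constant C₀ > 0, and K₀ ≥ 1 (both depending on d, m, A) such that for all K ≥ K₀ the following holds: for any finite collection 𝒯 of balls of radius K^{−1} in ℝ^{d−1} with centers in B^{d−1}(0,2), at least one of the following occurs. (i) There exists an affine subspace V of ℝ^{d−1} of dimension m such that every τ ∈ 𝒯 is contained in the C₀ K^{−α}-neighborhood of V. (ii) There exist τ, τ′ ∈ 𝒯 such that |M(ξ − ω)·(ξ̄ − ω̄)| ≥ A K^{−1} for all ξ, ξ̄ ∈ τ and all ω, ω̄ ∈ τ′. -/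
open MeasureTheory Metric

/-- The quadratic form `Mξ·η` associated to the hyperbolic paraboloid: the diagonal
matrix `M` has `+1` in the first `d-1-m` entries and `-1` in the last `m` entries. -/
noncomputable def Mform (d m : ℕ) (ξ η : EuclideanSpace ℝ (Fin (d - 1))) : ℝ :=
  ∑ i : Fin (d - 1), (if (i : ℕ) < d - 1 - m then (1 : ℝ) else -1) * ξ i * η i

namespace CapsAux

open Module Submodule

set_option linter.unusedSectionVars false

section Generic

variable {E : Type*} [NormedAddCommGroup E] [InnerProductSpace ℝ E] [FiniteDimensional ℝ E]

noncomputable def combo : List ℝ → List E → E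
  | a :: as, v :: vs => a • v + combo as vs
  | _, _ => 0

@[simp] lemma combo_nil (c : List ℝ) : combo c ([] : List E) = 0 := by cases c <;> rfl
@[simp] lemma combo_nil' (L : List E) : combo [] L = 0 := by cases L <;> rfl
@[simp] lemma combo_cons (a : ℝ) (c : List ℝ) (v : E) (L : List E) :
    combo (a :: c) (v :: L) = a • v + combo c L := rfl

def GoodList (ρ : ℝ) : List E → Prop
  | [] => True
  | v :: l => (∀ w ∈ Submodule.span ℝ {x | x ∈ l}, ρ ≤ ‖v - w‖) ∧ GoodList ρ l

lemma combo_mem_span (c : List ℝ) (L : List E) :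
    combo c L ∈ Submodule.span ℝ {x | x ∈ L} := by
  induction c generalizing L with
  | nil => simp
  | cons a as ih =>
    cases L with
    | nil => simp
    | cons v vs =>
      simp only [combo_cons]
      refine add_mem (smul_mem _ _ (subset_span (by simp))) ?_
      exact span_mono (fun x hx => by simp [hx]; exact Or.inr hx) (ih vs)

lemma map_combo (g : E →ₗ[ℝ] E) (c : List ℝ) (L : List E) :
    g (combo c L) = combo c (L.map g) := by
  induction c generalizing L with
  | nil => simp
  | cons a as ih =>
    cases L with
    | nil => simp
    | cons v vs => simp [ih vs]

lemma combo_bound (φ : E → ℝ) (hadd : ∀ u v, φ (u + v) = φ u + φ v)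
    (hsmul : ∀ (a : ℝ) v, φ (a • v) = a * φ v) (h0 : φ 0 = 0)
    (c : List ℝ) (L : List E) (M : ℝ) (hM : 0 ≤ M) (hL : ∀ x ∈ L, |φ x| ≤ M) :
    |φ (combo c L)| ≤ (c.map abs).sum * M := by
  induction c generalizing L with
  | nil => simp [h0]
  | cons a as ih =>
    cases L with
    | nil =>
      simp only [combo_nil, h0, abs_zero]
      have h1 : (0:ℝ) ≤ (List.map (abs) as).sum := List.sum_nonneg (by
        intro x hx
        obtain ⟨y, _, rfl⟩ := List.mem_map.1 hx
        exact abs_nonneg _)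
      have h2 : (0:ℝ) ≤ |a| + (List.map (abs) as).sum := by
        have := abs_nonneg a; linarith
      simpa using mul_nonneg h2 hM
    | cons v vs =>
      simp only [combo_cons, hadd, hsmul, List.map_cons, List.sum_cons]
      calc |a * φ v + φ (combo as vs)| ≤ |a * φ v| + |φ (combo as vs)| := abs_add_le _ _
        _ ≤ |a| * M + (as.map abs).sum * M := by
            refine add_le_add ?_ (ih vs (fun x hx => hL x (by simp [hx])))
            rw [abs_mul]
            exact mul_le_mul_of_nonneg_left (hL v (by simp)) (abs_nonneg a)
        _ = (|a| + (as.map abs).sum) * M := by ring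

lemma finrank_sup_singleton {s : Submodule ℝ E} {v : E} (hv : v ∉ s) :
    finrank ℝ ((ℝ ∙ v) ⊔ s : Submodule ℝ E) = finrank ℝ s + 1 := by
  have hv0 : v ≠ 0 := fun h => hv (h ▸ s.zero_mem)
  have hinf : (ℝ ∙ v) ⊓ s = ⊥ := by
    rw [eq_bot_iff]
    rintro x ⟨hx1, hx2⟩
    obtain ⟨c, rfl⟩ := Submodule.mem_span_singleton.1 hx1
    rcases eq_or_ne c 0 with rfl | hc
    · simp
    · exact absurd ((s.smul_mem_iff hc).mp hx2) hv
  have := Submodule.finrank_sup_add_finrank_inf_eq (ℝ ∙ v) s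
  rw [hinf] at this
  simp [finrank_span_singleton hv0] at this
  omega

lemma finrank_span_list_le (L : List E) :
    finrank ℝ (Submodule.span ℝ {x | x ∈ L}) ≤ L.length := by
  induction L with
  | nil => simp
  | cons v l ih =>
    have hset : {x | x ∈ v :: l} = insert v {x | x ∈ l} := by ext x; simp
    rw [hset, Submodule.span_insert]
    have := Submodule.finrank_sup_add_finrank_inf_eq (ℝ ∙ v) (Submodule.span ℝ {x | x ∈ l})
    have h1 : finrank ℝ (ℝ ∙ v) ≤ 1 := finrank_span_le_card {v} |>.trans (by simp)
    simp only [List.length_cons]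
    omega

lemma goodList_length_le {ρ : ℝ} (hρ : 0 < ρ) :
    ∀ L : List E, GoodList ρ L → L.length ≤ finrank ℝ (Submodule.span ℝ {x | x ∈ L})
  | [], _ => by simp
  | v :: l, h => by
    obtain ⟨hfar, hgood⟩ := h
    have ih := goodList_length_le hρ l hgood
    have hv : v ∉ Submodule.span ℝ {x | x ∈ l} := by
      intro hv
      have := hfar v hv
      simp at this
      linarith
    have hset : {x | x ∈ v :: l} = insert v {x | x ∈ l} := by ext x; simp
    rw [hset, Submodule.span_insert]
    rw [finrank_sup_singleton hv]
    simpa using ih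

lemma goodList_coeffs {ρ : ℝ} (hρ : 0 < ρ) :
    ∀ L : List E, GoodList ρ L → (∀ v ∈ L, ‖v‖ ≤ 4) →
    ∀ w ∈ Submodule.span ℝ {x | x ∈ L}, ∃ c : List ℝ, c.length = L.length ∧
      combo c L = w ∧ ∀ a ∈ c, |a| ≤ ‖w‖ * (1 + 4/ρ)^L.length / ρ
  | [], _, _, w, hw => by
    refine ⟨[], rfl, ?_, by simp⟩
    have : {x : E | x ∈ ([] : List E)} = (∅ : Set E) := by ext x; simp
    rw [this, Submodule.span_empty, Submodule.mem_bot] at hw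
    simp [hw]
  | v :: l, h, hnorm, w, hw => by
    obtain ⟨hfar, hgood⟩ := h
    have hset : {x | x ∈ v :: l} = insert v {x | x ∈ l} := by ext x; simp
    rw [hset, Submodule.mem_span_insert] at hw
    obtain ⟨a, z, hz, rfl⟩ := hw
    set w := a • v + z with hwdef
    have hbase : (1:ℝ) ≤ 1 + 4/ρ := by
      have : 0 < 4/ρ := by positivity
      linarith
    have hpow1 : (1:ℝ) ≤ (1 + 4/ρ)^l.length := one_le_pow₀ hbase
    have ha : |a| ≤ ‖w‖ / ρ := by
      rcases eq_or_ne a 0 with rfl | ha0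
      · simp; positivity
      · have hmem : -(a⁻¹ • z) ∈ Submodule.span ℝ {x | x ∈ l} := neg_mem (smul_mem _ _ hz)
        have := hfar _ hmem
        have heq : ‖v - -(a⁻¹ • z)‖ = ‖w‖ / |a| := by
          rw [sub_neg_eq_add]
          have : v + a⁻¹ • z = a⁻¹ • w := by
            rw [hwdef, smul_add, smul_smul, inv_mul_cancel₀ ha0, one_smul]
          rw [this, norm_smul, norm_inv, Real.norm_eq_abs, div_eq_inv_mul]
        rw [heq] at this
        rw [← sub_nonneg] at this ⊢
        have haa : 0 < |a| := abs_pos.2 ha0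
        calc (0:ℝ) ≤ (‖w‖/|a| - ρ) * (|a| / ρ) := by
              apply mul_nonneg (by linarith) (by positivity)
          _ = ‖w‖/ρ - |a| := by field_simp
    have hz_norm : ‖z‖ ≤ ‖w‖ * (1 + 4/ρ) := by
      have : z = w - a • v := by rw [hwdef]; abel
      rw [this]
      calc ‖w - a • v‖ ≤ ‖w‖ + ‖a • v‖ := norm_sub_le _ _
        _ ≤ ‖w‖ + |a| * 4 := by
            rw [norm_smul, Real.norm_eq_abs]
            have := hnorm v (by simp)
            nlinarith [abs_nonneg a]
        _ ≤ ‖w‖ + (‖w‖/ρ) * 4 := by nlinarith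
        _ = ‖w‖ * (1 + 4/ρ) := by field_simp
    obtain ⟨c, hlen, hcombo, hcb⟩ := goodList_coeffs hρ l hgood (fun x hx => hnorm x (by simp [hx])) z hz
    refine ⟨a :: c, by simp [hlen], by simp [hcombo, hwdef], ?_⟩
    have hwn : 0 ≤ ‖w‖ := norm_nonneg _
    intro b hb
    rcases List.mem_cons.1 hb with rfl | hb
    · calc |b| ≤ ‖w‖ / ρ := ha
        _ ≤ ‖w‖ * (1 + 4/ρ)^(v :: l).length / ρ := by
            gcongr
            exact le_mul_of_one_le_right hwn (one_le_pow₀ hbase)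
    · calc |b| ≤ ‖z‖ * (1 + 4/ρ)^l.length / ρ := hcb b hb
        _ ≤ ‖w‖ * (1 + 4/ρ)^(v :: l).length / ρ := by
            simp only [List.length_cons, pow_succ]
            gcongr ?_ / _
            nlinarith [pow_nonneg (le_trans zero_le_one hbase) l.length, hz_norm,
              norm_nonneg z]

lemma exists_superset_finrank_eq (r : ℕ) (D : Submodule ℝ E) (h1 : finrank ℝ D ≤ r)
    (h2 : r ≤ finrank ℝ E) : ∃ W : Submodule ℝ E, D ≤ W ∧ finrank ℝ W = r := by
  obtain ⟨j, hj⟩ : ∃ j, finrank ℝ D + j = r := ⟨r - finrank ℝ D, by omega⟩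
  clear h1
  induction j generalizing r with
  | zero => exact ⟨D, le_rfl, by omega⟩
  | succ j ih =>
    obtain ⟨W, hDW, hW⟩ := ih (finrank ℝ D + j) (by omega) rfl
    have hlt : finrank ℝ W < finrank ℝ E := by omega
    obtain ⟨v, hv⟩ := W.exists_of_finrank_lt hlt
    have hvW : v ∉ W := by simpa using hv 1 one_ne_zero
    refine ⟨(ℝ ∙ v) ⊔ W, hDW.trans le_sup_right, ?_⟩
    rw [finrank_sup_singleton hvW]
    omega

lemma exists_maximal_goodList {ι : Type*} (f : ι → E) (T : Set ι) (ρ : ℝ) (m : ℕ)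
    (hbound : ∀ l : List ι, (∀ i ∈ l, i ∈ T) → GoodList ρ (l.map f) → l.length ≤ m) :
    ∃ l : List ι, (∀ i ∈ l, i ∈ T) ∧ GoodList ρ (l.map f) ∧ l.length ≤ m ∧
      ∀ i ∈ T, ∃ w ∈ Submodule.span ℝ {x | x ∈ l.map f}, ‖f i - w‖ < ρ := by
  by_contra hcon
  push_neg at hcon
  have key : ∀ j : ℕ, ∃ l : List ι, (∀ i ∈ l, i ∈ T) ∧ GoodList ρ (l.map f) ∧ l.length = j := by
    intro j
    induction j with
    | zero => exact ⟨[], by simp, trivial, rfl⟩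
    | succ j ih =>
      obtain ⟨l, hlT, hlg, hlen⟩ := ih
      obtain ⟨i, hiT, hfar⟩ := hcon l hlT hlg (hbound l hlT hlg)
      refine ⟨i :: l, ?_, ?_, by simp [hlen]⟩
      · intro x hx
        rcases List.mem_cons.1 hx with rfl | hx
        exacts [hiT, hlT x hx]
      · rw [List.map_cons]
        exact ⟨hfar, hlg⟩
  obtain ⟨l, hlT, hlg, hlen⟩ := key (m + 1)
  have := hbound l hlT hlg
  omega

end Generic

section Euclid

variable (d m : ℕ)

local notation "E" => EuclideanSpace ℝ (Fin (d - 1))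

noncomputable def mvec (u : E) : E := WithLp.toLp 2 fun i : Fin (d - 1) => if (i : ℕ) < d - 1 - m then u i else -u i

lemma mform_eq_inner (u v : E) : Mform d m u v = inner ℝ (mvec d m u) v := by
  rw [Mform, PiLp.inner_apply]
  apply Finset.sum_congr rfl
  intro i _
  simp only [RCLike.inner_apply, conj_trivial, mvec, PiLp.toLp_apply]
  split_ifs <;> ring

lemma norm_mvec (u : E) : ‖mvec d m u‖ = ‖u‖ := by
  rw [EuclideanSpace.norm_eq, EuclideanSpace.norm_eq]
  congr 1
  apply Finset.sum_congr rfl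
  intro i _
  simp only [mvec, PiLp.toLp_apply]
  split_ifs <;> simp

lemma abs_mform_le (u v : E) : |Mform d m u v| ≤ ‖u‖ * ‖v‖ := by
  rw [mform_eq_inner, ← norm_mvec d m u]
  exact abs_real_inner_le_norm _ _

lemma mform_comm (u v : E) : Mform d m u v = Mform d m v u := by
  unfold Mform; apply Finset.sum_congr rfl; intros; ring

lemma mform_add_left (u w v : E) :
    Mform d m (u + w) v = Mform d m u v + Mform d m w v := by
  unfold Mform
  rw [← Finset.sum_add_distrib]
  apply Finset.sum_congr rfl
  intro i _
  have : (u + w) i = u i + w i := rfl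
  rw [this]; ring

lemma mform_sub_left (u w v : E) :
    Mform d m (u - w) v = Mform d m u v - Mform d m w v := by
  unfold Mform
  rw [← Finset.sum_sub_distrib]
  apply Finset.sum_congr rfl
  intro i _
  have : (u - w) i = u i - w i := rfl
  rw [this]; ring

lemma mform_smul_left (a : ℝ) (u v : E) :
    Mform d m (a • u) v = a * Mform d m u v := by
  unfold Mform
  rw [Finset.mul_sum]
  apply Finset.sum_congr rfl
  intro i _
  have : (a • u) i = a * u i := rfl
  rw [this]; ring

lemma mform_zero_left (v : E) : Mform d m 0 v = 0 := by
  unfold Mform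
  apply Finset.sum_eq_zero
  intro i _
  have : (0 : E) i = 0 := rfl
  rw [this]; ring

lemma mform_add_right (u v w : E) :
    Mform d m u (v + w) = Mform d m u v + Mform d m u w := by
  rw [mform_comm, mform_add_left, mform_comm d m v u, mform_comm d m w u]

lemma mform_sub_right (u v w : E) :
    Mform d m u (v - w) = Mform d m u v - Mform d m u w := by
  rw [mform_comm, mform_sub_left, mform_comm d m v u, mform_comm d m w u]

lemma mform_smul_right (a : ℝ) (u v : E) :
    Mform d m u (a • v) = a * Mform d m u v := by
  rw [mform_comm, mform_smul_left, mform_comm d m v u]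

lemma mform_zero_right (u : E) : Mform d m u 0 = 0 := by
  rw [mform_comm, mform_zero_left]

lemma mform_close (u₁ a b : E) : Mform d m u₁ u₁
    = Mform d m (u₁ - a) u₁ + Mform d m a (u₁ - b) + Mform d m a b := by
  rw [mform_sub_left, mform_sub_right]
  ring

lemma mform_polar (u v : E) : Mform d m u v
    = (Mform d m u u + Mform d m v v - Mform d m (u - v) (u - v)) / 2 := by
  rw [mform_sub_left, mform_sub_right, mform_sub_right, mform_comm d m v u]
  ring

noncomputable def py : E →ₗ[ℝ] E where
  toFun u := WithLp.toLp 2 fun i : Fin (d - 1) => if (i : ℕ) < d - 1 - m then 0 else u i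
  map_add' u v := by
    ext i
    show (if (i:ℕ) < d-1-m then (0:ℝ) else (u+v) i) = _
    have : (u + v) i = u i + v i := rfl
    simp only [this]
    show _ = ((if (i:ℕ) < d-1-m then (0:ℝ) else u i) + (if (i:ℕ) < d-1-m then (0:ℝ) else v i))
    split_ifs <;> simp
  map_smul' a u := by
    ext i
    show (if (i:ℕ) < d-1-m then (0:ℝ) else (a • u) i) = a * (if (i:ℕ) < d-1-m then (0:ℝ) else u i)
    have : (a • u) i = a * u i := rfl
    simp only [this]
    split_ifs <;> simp

noncomputable def px : E →ₗ[ℝ] E where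
  toFun u := WithLp.toLp 2 fun i : Fin (d - 1) => if (i : ℕ) < d - 1 - m then u i else 0
  map_add' u v := by
    ext i
    show (if (i:ℕ) < d-1-m then (u+v) i else (0:ℝ)) = _
    have : (u + v) i = u i + v i := rfl
    simp only [this]
    show _ = ((if (i:ℕ) < d-1-m then u i else (0:ℝ)) + (if (i:ℕ) < d-1-m then v i else (0:ℝ)))
    split_ifs <;> simp
  map_smul' a u := by
    ext i
    show (if (i:ℕ) < d-1-m then (a • u) i else (0:ℝ)) = a * (if (i:ℕ) < d-1-m then u i else (0:ℝ))
    have : (a • u) i = a * u i := rfl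
    simp only [this]
    split_ifs <;> simp

lemma px_apply (u : E) (i : Fin (d-1)) :
    px d m u i = if (i : ℕ) < d - 1 - m then u i else 0 := rfl

lemma py_apply (u : E) (i : Fin (d-1)) :
    py d m u i = if (i : ℕ) < d - 1 - m then 0 else u i := rfl

lemma px_add_py (u : E) : px d m u + py d m u = u := by
  ext i
  show (px d m u i) + (py d m u i) = u i
  rw [px_apply, py_apply]
  split_ifs <;> simp

lemma mform_eq_inner_sub (u v : E) :
    Mform d m u v = inner ℝ (px d m u) (px d m v) - inner ℝ (py d m u) (py d m v) := by
  rw [Mform, PiLp.inner_apply, PiLp.inner_apply, ← Finset.sum_sub_distrib]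
  apply Finset.sum_congr rfl
  intro i _
  simp only [RCLike.inner_apply, conj_trivial, px_apply, py_apply]
  split_ifs <;> ring

lemma mform_self (u : E) :
    Mform d m u u = ‖px d m u‖^2 - ‖py d m u‖^2 := by
  rw [mform_eq_inner_sub, real_inner_self_eq_norm_sq, real_inner_self_eq_norm_sq]

lemma norm_py_le (u : E) : ‖py d m u‖ ≤ ‖u‖ := by
  rw [EuclideanSpace.norm_eq, EuclideanSpace.norm_eq]
  apply Real.sqrt_le_sqrt
  apply Finset.sum_le_sum
  intro i _
  rw [py_apply]
  split_ifs <;> simp [sq_nonneg]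

lemma norm_le_px_py (u : E) : ‖u‖ ≤ ‖px d m u‖ + ‖py d m u‖ := by
  conv_lhs => rw [← px_add_py d m u]
  exact norm_add_le _ _

noncomputable def gvec (hmn : m ≤ d - 1) (j : Fin m) : E :=
  EuclideanSpace.single ⟨d - 1 - m + (j : ℕ), by omega⟩ 1

lemma py_eq_sum (hmn : m ≤ d - 1) (u : E) :
    py d m u = ∑ j : Fin m, u ⟨d - 1 - m + (j : ℕ), by omega⟩ • gvec d m hmn j := by
  ext i
  have hsum : (∑ j : Fin m, u ⟨d - 1 - m + (j : ℕ), by omega⟩ • gvec d m hmn j) i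
      = ∑ j : Fin m, (u ⟨d - 1 - m + (j : ℕ), by omega⟩ • gvec d m hmn j) i := by
    rw [WithLp.ofLp_sum]; exact Finset.sum_apply i Finset.univ _
  show (if (i : ℕ) < d - 1 - m then 0 else u i) = _
  rw [hsum]
  have hterm : ∀ j : Fin m, (u ⟨d - 1 - m + (j : ℕ), by omega⟩ • gvec d m hmn j) i
      = if i = ⟨d - 1 - m + (j : ℕ), by omega⟩ then u i else 0 := by
    intro j
    have : (u ⟨d - 1 - m + (j : ℕ), by omega⟩ • gvec d m hmn j) i
        = u ⟨d - 1 - m + (j : ℕ), by omega⟩ * (gvec d m hmn j) i := rfl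
    rw [this, gvec, EuclideanSpace.single_apply]
    split_ifs with h
    · subst h; simp
    · simp
  simp only [hterm]
  split_ifs with h
  · symm
    apply Finset.sum_eq_zero
    intro j _
    rw [if_neg]
    intro he
    have : (i : ℕ) = d - 1 - m + (j : ℕ) := by rw [he]
    omega
  · have hip : d - 1 - m ≤ (i : ℕ) := by omega
    have him : (i : ℕ) - (d - 1 - m) < m := by
      have := i.isLt
      omega
    set j₀ : Fin m := ⟨(i : ℕ) - (d - 1 - m), him⟩ with hj₀
    have hcond : ∀ j : Fin m, (i = (⟨d - 1 - m + (j : ℕ), by omega⟩ : Fin (d-1))) ↔ j = j₀ := by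
      intro j
      constructor
      · intro he
        have : (i : ℕ) = d - 1 - m + (j : ℕ) := by rw [he]
        apply Fin.ext
        simp [hj₀, this]
      · intro he
        subst he
        apply Fin.ext
        simp [hj₀]
        omega
    simp only [hcond]
    rw [Finset.sum_ite_eq' Finset.univ j₀ (fun _ => u i)]
    simp

lemma py_mem_span_gvec (hmn : m ≤ d - 1) (u : E) :
    py d m u ∈ Submodule.span ℝ {x | x ∈ (List.finRange m).map (gvec d m hmn)} := by
  rw [py_eq_sum d m hmn u]
  apply Submodule.sum_smul_mem
  intro j _
  apply Submodule.subset_span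
  simp only [Set.mem_setOf_eq, List.mem_map]
  exact ⟨j, List.mem_finRange j, rfl⟩

end Euclid

end CapsAux

set_option maxHeartbeats 2000000 in
theorem caps_dichotomy (d m : ℕ) (hm1 : 1 ≤ m) (hm2 : 2 * m ≤ d - 1)
    (A : ℝ) (hA : 0 < A) :
    ∃ α C₀ K₀ : ℝ, 0 < α ∧ 0 < C₀ ∧ 1 ≤ K₀ ∧
      ∀ K : ℝ, K₀ ≤ K →
      ∀ (ι : Type) (T : Finset ι) (ctr : ι → EuclideanSpace ℝ (Fin (d - 1))),
        (∀ i ∈ T, ctr i ∈ ball (0 : EuclideanSpace ℝ (Fin (d - 1))) 2) →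
        ((∃ V : AffineSubspace ℝ (EuclideanSpace ℝ (Fin (d - 1))),
            (V : Set (EuclideanSpace ℝ (Fin (d - 1)))).Nonempty ∧
            Module.finrank ℝ V.direction = m ∧
            ∀ i ∈ T, ball (ctr i) K⁻¹ ⊆
              Metric.thickening (C₀ * K ^ (-α))
                (V : Set (EuclideanSpace ℝ (Fin (d - 1))))) ∨
          (∃ i ∈ T, ∃ j ∈ T,
            ∀ ξ ∈ ball (ctr i) K⁻¹, ∀ ξ' ∈ ball (ctr i) K⁻¹,
            ∀ ω ∈ ball (ctr j) K⁻¹, ∀ ω' ∈ ball (ctr j) K⁻¹,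
              A * K⁻¹ ≤ |Mform d m (ξ - ω) (ξ' - ω')|)) := by
  classical
  open CapsAux Module Submodule in
  have hmn : m ≤ d - 1 := by omega
  set Cm : ℝ := 1 + (m : ℝ) * 5 ^ (m + 1) with hCmdef
  have hCm0 : (0:ℝ) < Cm := by positivity
  set Cx : ℝ := Real.sqrt (1 + 2 * (A + 20) * Cm ^ 2) with hCxdef
  have hCx0 : 0 ≤ Cx := Real.sqrt_nonneg _
  set α : ℝ := (2 * (m : ℝ) + 4)⁻¹ with hαdef
  have hα0 : 0 < α := by positivity
  refine ⟨α, Cx + 3, 1, hα0, by positivity, le_refl 1, ?_⟩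
  intro K hK ι T ctr hctr
  by_cases hii : (∃ i ∈ T, ∃ j ∈ T,
      ∀ ξ ∈ ball (ctr i) K⁻¹, ∀ ξ' ∈ ball (ctr i) K⁻¹,
      ∀ ω ∈ ball (ctr j) K⁻¹, ∀ ω' ∈ ball (ctr j) K⁻¹,
        A * K⁻¹ ≤ |Mform d m (ξ - ω) (ξ' - ω')|)
  · exact Or.inr hii
  left
  push_neg at hii
  have hK0 : (0:ℝ) < K := lt_of_lt_of_le one_pos hK
  have hKinv0 : (0:ℝ) < K⁻¹ := by positivity
  have hKinv1 : K⁻¹ ≤ 1 := by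
    rw [inv_le_one_iff₀]; right; exact hK
  set ρ : ℝ := K ^ (-α) with hρdef
  have hρ0 : 0 < ρ := Real.rpow_pos_of_pos hK0 _
  have hρ1 : ρ ≤ 1 := Real.rpow_le_one_of_one_le_of_nonpos hK (by linarith)
  have hKρ : K⁻¹ = ρ ^ (2 * m + 4) := by
    rw [hρdef, ← Real.rpow_natCast (K ^ (-α)) (2 * m + 4), ← Real.rpow_mul hK0.le]
    have : -α * ((2 * m + 4 : ℕ) : ℝ) = -1 := by
      rw [hαdef]
      push_cast
      field_simp
    rw [this, Real.rpow_neg_one]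
  have hKinvρ : K⁻¹ ≤ ρ := by
    rw [hKρ]
    calc ρ ^ (2 * m + 4) ≤ ρ ^ 1 := pow_le_pow_of_le_one hρ0.le hρ1 (by omega)
      _ = ρ := pow_one ρ
  have hErank : finrank ℝ (EuclideanSpace ℝ (Fin (d - 1))) = d - 1 :=
    finrank_euclideanSpace_fin
  rcases T.eq_empty_or_nonempty with rfl | ⟨i₀, hi₀⟩
  · obtain ⟨W, -, hWrank⟩ := exists_superset_finrank_eq m (⊥ : Submodule ℝ (EuclideanSpace ℝ (Fin (d - 1)))) (by simp) (by omega)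
    refine ⟨AffineSubspace.mk' 0 W, ⟨0, AffineSubspace.self_mem_mk' _ _⟩, ?_, by simp⟩
    rw [AffineSubspace.direction_mk']
    exact hWrank
  -- T nonempty, with i₀ ∈ T
  set δ : ℝ := (A + 20) * K⁻¹ with hδdef
  have hδ0 : 0 ≤ δ := by positivity
  have hcnorm : ∀ i ∈ T, ‖ctr i‖ ≤ 2 := by
    intro i hi
    have := hctr i hi
    rw [mem_ball_zero_iff] at this
    exact this.le
  have step1 : ∀ i ∈ T, ∀ j ∈ T,
      |Mform d m (ctr i - ctr j) (ctr i - ctr j)| ≤ δ := by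
    intro i hi j hj
    obtain ⟨ξ, hξ, ξ', hξ', ω, hω, ω', hω', hlt⟩ := hii i hi j hj
    set u₁ := ctr i - ctr j with hu₁
    have h4 : ‖u₁‖ ≤ 4 := by
      calc ‖ctr i - ctr j‖ ≤ ‖ctr i‖ + ‖ctr j‖ := norm_sub_le _ _
        _ ≤ 4 := by have := hcnorm i hi; have := hcnorm j hj; linarith
    have hξd : ‖ctr i - ξ‖ ≤ K⁻¹ := by
      rw [← norm_sub_rev]; exact (mem_ball_iff_norm.1 hξ).le
    have hξ'd : ‖ctr i - ξ'‖ ≤ K⁻¹ := by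
      rw [← norm_sub_rev]; exact (mem_ball_iff_norm.1 hξ').le
    have hωd : ‖ctr j - ω‖ ≤ K⁻¹ := by
      rw [← norm_sub_rev]; exact (mem_ball_iff_norm.1 hω).le
    have hω'd : ‖ctr j - ω'‖ ≤ K⁻¹ := by
      rw [← norm_sub_rev]; exact (mem_ball_iff_norm.1 hω').le
    have he : ‖u₁ - (ξ - ω)‖ ≤ 2 * K⁻¹ := by
      have hrw : u₁ - (ξ - ω) = (ctr i - ξ) - (ctr j - ω) := by rw [hu₁]; abel
      rw [hrw]
      calc ‖(ctr i - ξ) - (ctr j - ω)‖ ≤ ‖ctr i - ξ‖ + ‖ctr j - ω‖ := norm_sub_le _ _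
        _ ≤ 2 * K⁻¹ := by linarith
    have he' : ‖u₁ - (ξ' - ω')‖ ≤ 2 * K⁻¹ := by
      have hrw : u₁ - (ξ' - ω') = (ctr i - ξ') - (ctr j - ω') := by rw [hu₁]; abel
      rw [hrw]
      calc ‖(ctr i - ξ') - (ctr j - ω')‖ ≤ ‖ctr i - ξ'‖ + ‖ctr j - ω'‖ := norm_sub_le _ _
        _ ≤ 2 * K⁻¹ := by linarith
    have hξω : ‖ξ - ω‖ ≤ 6 := by
      have : ξ - ω = u₁ - (u₁ - (ξ - ω)) := by abel
      rw [this]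
      calc ‖u₁ - (u₁ - (ξ - ω))‖ ≤ ‖u₁‖ + ‖u₁ - (ξ - ω)‖ := norm_sub_le _ _
        _ ≤ 6 := by linarith
    have hdec : Mform d m u₁ u₁ = Mform d m (u₁ - (ξ - ω)) u₁
        + Mform d m (ξ - ω) (u₁ - (ξ' - ω')) + Mform d m (ξ - ω) (ξ' - ω') :=
      mform_close d m u₁ (ξ - ω) (ξ' - ω')
    have hb1 : |Mform d m (u₁ - (ξ - ω)) u₁| ≤ 2 * K⁻¹ * 4 := by
      calc |Mform d m (u₁ - (ξ - ω)) u₁| ≤ ‖u₁ - (ξ - ω)‖ * ‖u₁‖ := abs_mform_le _ _ _ _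
        _ ≤ 2 * K⁻¹ * 4 := by
            apply mul_le_mul he h4 (norm_nonneg _) (by positivity)
    have hb2 : |Mform d m (ξ - ω) (u₁ - (ξ' - ω'))| ≤ 6 * (2 * K⁻¹) := by
      calc |Mform d m (ξ - ω) (u₁ - (ξ' - ω'))| ≤ ‖ξ - ω‖ * ‖u₁ - (ξ' - ω')‖ :=
            abs_mform_le _ _ _ _
        _ ≤ 6 * (2 * K⁻¹) := by
            apply mul_le_mul hξω he' (norm_nonneg _) (by norm_num)
    calc |Mform d m u₁ u₁| ≤ |Mform d m (u₁ - (ξ - ω)) u₁|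
          + |Mform d m (ξ - ω) (u₁ - (ξ' - ω'))| + |Mform d m (ξ - ω) (ξ' - ω')| := by
          rw [hdec]
          exact (abs_add_le _ _).trans (by gcongr; exact abs_add_le _ _)
      _ ≤ δ := by
          rw [hδdef]
          nlinarith [hKinv0.le, hlt.le]
  set vv : ι → EuclideanSpace ℝ (Fin (d - 1)) := fun i => ctr i - ctr i₀ with hvvdef
  set yv : ι → EuclideanSpace ℝ (Fin (d - 1)) := fun i => py d m (vv i) with hyvdef
  have hvnorm : ∀ i ∈ T, ‖vv i‖ ≤ 4 := by
    intro i hi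
    calc ‖ctr i - ctr i₀‖ ≤ ‖ctr i‖ + ‖ctr i₀‖ := norm_sub_le _ _
      _ ≤ 4 := by have := hcnorm i hi; have := hcnorm i₀ hi₀; linarith
  have hyv4 : ∀ i ∈ T, ‖yv i‖ ≤ 4 := fun i hi => (norm_py_le d m (vv i)).trans (hvnorm i hi)
  have step2 : ∀ i ∈ T, ∀ j ∈ T, |Mform d m (vv i) (vv j)| ≤ 2 * δ := by
    intro i hi j hj
    have hpol := mform_polar d m (vv i) (vv j)
    have hij : vv i - vv j = ctr i - ctr j := sub_sub_sub_cancel_right _ _ _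
    have h1 : |Mform d m (vv i) (vv i)| ≤ δ := step1 i hi i₀ hi₀
    have h2 : |Mform d m (vv j) (vv j)| ≤ δ := step1 j hj i₀ hi₀
    have h3 : |Mform d m (vv i - vv j) (vv i - vv j)| ≤ δ := hij ▸ step1 i hi j hj
    rw [hpol, abs_le]
    rw [abs_le] at h1 h2 h3
    constructor <;> linarith [h1.1, h1.2, h2.1, h2.2, h3.1, h3.2]
  -- greedy selection on the y-projections
  have hbound : ∀ l : List ι, (∀ i ∈ l, i ∈ (↑T : Set ι)) → GoodList ρ (l.map yv) →
      l.length ≤ m := by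
    intro l hlT hlg
    have h1 : (l.map yv).length ≤ finrank ℝ (Submodule.span ℝ {x | x ∈ l.map yv}) :=
      goodList_length_le hρ0 _ hlg
    have h2 : Submodule.span ℝ {x | x ∈ l.map yv} ≤
        Submodule.span ℝ {x | x ∈ (List.finRange m).map (gvec d m hmn)} := by
      rw [Submodule.span_le]
      rintro x hx
      obtain ⟨t, htl, rfl⟩ := List.mem_map.1 hx
      exact py_mem_span_gvec d m hmn (vv t)
    have h3 := Submodule.finrank_mono h2
    have h4 := finrank_span_list_le ((List.finRange m).map (gvec d m hmn))
    simp only [List.length_map] at h1 h4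
    simp only [List.length_finRange] at h4
    omega
  obtain ⟨l, hlT, hlg, hllen, hlcover⟩ := exists_maximal_goodList yv (↑T : Set ι) ρ m hbound
  have hlTT : ∀ t ∈ l, t ∈ T := fun t ht => hlT t ht
  -- the main distance estimate
  have main : ∀ i ∈ T, ∃ zw ∈ Submodule.span ℝ {x | x ∈ l.map vv},
      ‖vv i - zw‖ ≤ (Cx + 1) * ρ := by
    intro i hi
    obtain ⟨w, hwmem, hwnear⟩ := hlcover i hi
    have hmapnorm : ∀ x ∈ l.map yv, ‖x‖ ≤ 4 := by
      rintro x hx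
      obtain ⟨t, htl, rfl⟩ := List.mem_map.1 hx
      exact hyv4 t (hlTT t htl)
    obtain ⟨cl, hclen, hccombo, hcb⟩ := goodList_coeffs hρ0 (l.map yv) hlg hmapnorm w hwmem
    have hw5 : ‖w‖ ≤ 5 := by
      have hwi : ‖w‖ = ‖yv i - (yv i - w)‖ := by rw [sub_sub_cancel]
      have h2 : ‖yv i - (yv i - w)‖ ≤ ‖yv i‖ + ‖yv i - w‖ := norm_sub_le _ _
      have := hyv4 i hi
      have := hwnear.le
      linarith [hρ1]
    have hρp : (0:ℝ) < ρ^(m+1) := pow_pos hρ0 _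
    have hρp1 : ρ^(m+1) ≤ 1 := pow_le_one₀ hρ0.le hρ1
    have hlen_le : (l.map yv).length ≤ m := by simpa using hllen
    have hcoef : ∀ a ∈ cl, |a| ≤ 5^(m+1) / ρ^(m+1) := by
      intro a ha
      have h1 := hcb a ha
      have hb1 : (0:ℝ) ≤ 1 + 4/ρ := by positivity
      have hb2 : 1 + 4/ρ ≤ 5/ρ := by
        have h5 : (5:ℝ)/ρ = 1/ρ + 4/ρ := by ring
        have h6 : (1:ℝ) ≤ 1/ρ := by rw [le_div_iff₀ hρ0]; linarith
        linarith
      have h15 : (1:ℝ) ≤ 5/ρ := by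
        have h6 : (1:ℝ) ≤ 1/ρ := by rw [le_div_iff₀ hρ0]; linarith
        have : (1:ℝ)/ρ ≤ 5/ρ := by gcongr <;> norm_num
        linarith
      have hp1 : (1 + 4/ρ)^(l.map yv).length ≤ (5/ρ)^(l.map yv).length :=
        pow_le_pow_left₀ hb1 hb2 _
      have hp2 : (5/ρ)^(l.map yv).length ≤ (5/ρ)^m := pow_le_pow_right₀ h15 hlen_le
      calc |a| ≤ ‖w‖ * (1 + 4/ρ)^(l.map yv).length / ρ := h1
        _ ≤ 5 * (5/ρ)^m / ρ := by
            gcongr ?_ / _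
            exact mul_le_mul hw5 (hp1.trans hp2) (pow_nonneg hb1 _) (by norm_num)
        _ = 5^(m+1)/ρ^(m+1) := by
            rw [div_pow]
            field_simp
            ring
    set Sa : ℝ := (cl.map abs).sum with hSadef
    have hSa0 : 0 ≤ Sa := List.sum_nonneg (by
      rintro x hx
      obtain ⟨y, _, rfl⟩ := List.mem_map.1 hx
      exact abs_nonneg _)
    have hSam : Sa ≤ (m:ℝ) * (5^(m+1)/ρ^(m+1)) := by
      have hlen2 : cl.length ≤ m := by rw [hclen]; simpa using hllen
      have hb := List.sum_le_card_nsmul (cl.map abs) (5^(m+1)/ρ^(m+1)) (by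
        rintro x hx
        obtain ⟨y, hy, rfl⟩ := List.mem_map.1 hx
        exact hcoef y hy)
      rw [List.length_map] at hb
      have hcast : (cl.length : ℝ) ≤ (m:ℝ) := by exact_mod_cast hlen2
      calc Sa ≤ cl.length • (5^(m+1)/ρ^(m+1)) := hb
        _ = (cl.length : ℝ) * (5^(m+1)/ρ^(m+1)) := nsmul_eq_mul _ _
        _ ≤ (m:ℝ) * (5^(m+1)/ρ^(m+1)) := by
            apply mul_le_mul_of_nonneg_right hcast (by positivity)
    have h1Sa : 1 + Sa ≤ Cm / ρ^(m+1) := by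
      have ha : (1:ℝ) ≤ 1/ρ^(m+1) := by rw [le_div_iff₀ hρp]; linarith
      have hb : (m:ℝ) * (5^(m+1)/ρ^(m+1)) = ((m:ℝ)*5^(m+1))/ρ^(m+1) := by ring
      calc 1 + Sa ≤ 1/ρ^(m+1) + ((m:ℝ)*5^(m+1))/ρ^(m+1) := by
            rw [← hb]; linarith
        _ = Cm / ρ^(m+1) := by rw [hCmdef, add_div]
    set wf := combo cl (l.map vv) with hwfdef
    have hpyw : py d m wf = w := by
      rw [hwfdef, map_combo, List.map_map]
      have hco : (py d m) ∘ vv = yv := rfl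
      rw [hco, hccombo]
    have hrow : ∀ s ∈ T, |Mform d m (vv s) (vv i - wf)| ≤ 2*δ*(1+Sa) := by
      intro s hs
      have hsub : Mform d m (vv s) (vv i - wf)
          = Mform d m (vv s) (vv i) - Mform d m (vv s) wf := mform_sub_right d m _ _ _
      have hcb2 : |Mform d m (vv s) wf| ≤ Sa * (2*δ) := by
        rw [hwfdef]
        exact combo_bound (fun z => Mform d m (vv s) z)
          (fun u v => mform_add_right d m (vv s) u v)
          (fun a z => mform_smul_right d m a (vv s) z)
          (mform_zero_right d m (vv s)) cl (l.map vv) (2*δ) (by positivity) (by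
            rintro x hx
            obtain ⟨t, htl, rfl⟩ := List.mem_map.1 hx
            exact step2 s hs t (hlTT t htl))
      have hb1 : |Mform d m (vv s) (vv i)| ≤ 2*δ := step2 s hs i hi
      rw [hsub, sub_eq_add_neg]
      refine (abs_add_le _ _).trans ?_
      rw [abs_neg]
      nlinarith
    have hQ : |Mform d m (vv i - wf) (vv i - wf)| ≤ 2*δ*(1+Sa)^2 := by
      have hsub : Mform d m (vv i - wf) (vv i - wf)
          = Mform d m (vv i) (vv i - wf) - Mform d m wf (vv i - wf) := mform_sub_left d m _ _ _
      have hcb2 : |Mform d m wf (vv i - wf)| ≤ Sa * (2*δ*(1+Sa)) := by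
        rw [hwfdef]
        exact combo_bound (fun z => Mform d m z (vv i - wf))
          (fun u v => mform_add_left d m u v _)
          (fun a z => mform_smul_left d m a z _)
          (mform_zero_left d m _) cl (l.map vv) (2*δ*(1+Sa)) (by positivity) (by
            rintro x hx
            obtain ⟨t, htl, rfl⟩ := List.mem_map.1 hx
            exact hrow t (hlTT t htl))
      have hb1 : |Mform d m (vv i) (vv i - wf)| ≤ 2*δ*(1+Sa) := hrow i hi
      rw [hsub, sub_eq_add_neg]
      refine (abs_add_le _ _).trans ?_
      rw [abs_neg]
      nlinarith
    have hpow : ρ^(2*m+4) = (ρ^(m+1))^2 * ρ^2 := by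
      rw [← pow_mul, ← pow_add]
      congr 1
      omega
    have hQ2 : |Mform d m (vv i - wf) (vv i - wf)| ≤ 2*(A+20)*Cm^2*ρ^2 := by
      have hsq : (1+Sa)^2 ≤ (Cm/ρ^(m+1))^2 := by
        apply pow_le_pow_left₀ (by linarith) h1Sa
      have e1 : 2*δ*(Cm/ρ^(m+1))^2 = 2*(A+20)*Cm^2*ρ^2 := by
        rw [hδdef, hKρ, hpow]
        field_simp
      calc |Mform d m (vv i - wf) (vv i - wf)| ≤ 2*δ*(1+Sa)^2 := hQ
        _ ≤ 2*δ*(Cm/ρ^(m+1))^2 := by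
            apply mul_le_mul_of_nonneg_left hsq (by positivity)
        _ = 2*(A+20)*Cm^2*ρ^2 := e1
    have hself := mform_self d m (vv i - wf)
    have hpyq : ‖py d m (vv i - wf)‖ ≤ ρ := by
      rw [map_sub, hpyw]
      exact hwnear.le
    have hpxq : ‖px d m (vv i - wf)‖^2 ≤ (1 + 2*(A+20)*Cm^2) * ρ^2 := by
      have h1 : ‖py d m (vv i - wf)‖^2 ≤ ρ^2 := pow_le_pow_left₀ (norm_nonneg _) hpyq 2
      have h2 : Mform d m (vv i - wf) (vv i - wf) ≤ 2*(A+20)*Cm^2*ρ^2 :=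
        (le_abs_self _).trans hQ2
      nlinarith
    have hsqrt : Real.sqrt ((1 + 2*(A+20)*Cm^2) * ρ^2) = Cx * ρ := by
      rw [Real.sqrt_mul (by positivity), Real.sqrt_sq hρ0.le, hCxdef]
    have hpxq' : ‖px d m (vv i - wf)‖ ≤ Cx * ρ := by
      rw [← hsqrt, ← Real.sqrt_sq (norm_nonneg (px d m (vv i - wf)))]
      exact Real.sqrt_le_sqrt hpxq
    have hqn : ‖vv i - wf‖ ≤ (Cx+1)*ρ := by
      have := norm_le_px_py d m (vv i - wf)
      nlinarith
    exact ⟨wf, by rw [hwfdef]; exact combo_mem_span _ _, hqn⟩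
  -- build the affine subspace
  have hDrank : finrank ℝ (Submodule.span ℝ {x | x ∈ l.map vv}) ≤ m := by
    have h1 := finrank_span_list_le (l.map vv)
    simp only [List.length_map] at h1
    omega
  obtain ⟨W, hDW, hWrank⟩ := exists_superset_finrank_eq m _ hDrank (by omega)
  refine ⟨AffineSubspace.mk' (ctr i₀) W, ⟨ctr i₀, AffineSubspace.self_mem_mk' _ _⟩, ?_, ?_⟩
  · rw [AffineSubspace.direction_mk']
    exact hWrank
  · intro i hi z hz
    obtain ⟨zw, hzwmem, hzw⟩ := main i hi
    rw [Metric.mem_thickening_iff]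
    refine ⟨zw + ctr i₀, ?_, ?_⟩
    · show zw + ctr i₀ ∈ AffineSubspace.mk' (ctr i₀) W
      rw [AffineSubspace.mem_mk']
      have hvs : (zw + ctr i₀) -ᵥ ctr i₀ = zw := by
        rw [vsub_eq_sub, add_sub_cancel_right]
      rw [hvs]
      exact hDW hzwmem
    · have hd1 : dist z (ctr i) < K⁻¹ := mem_ball.1 hz
      have hd2 : dist (ctr i) (zw + ctr i₀) ≤ (Cx+1)*ρ := by
        rw [dist_eq_norm]
        have hrw : ctr i - (zw + ctr i₀) = vv i - zw := by
          show ctr i - (zw + ctr i₀) = (ctr i - ctr i₀) - zw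
          abel
        rw [hrw]
        exact hzw
      calc dist z (zw + ctr i₀) ≤ dist z (ctr i) + dist (ctr i) (zw + ctr i₀) :=
            dist_triangle _ _ _
        _ < K⁻¹ + (Cx+1)*ρ := by linarith
        _ ≤ (Cx+2)*ρ := by nlinarith [hKinvρ]
        _ < (Cx+3)*ρ := by nlinarith [hρ0]
end

section
/- (Quadratic form bound on a well-spread span.) Let 1 ≤ k ≤ d−1 be an integer and let c > 0 and 0 < σ < 1/2. There is a constant C (depending on d, m, k, c, σ) such that for all K ≥ 1 the following holds: if η¹, …, η^k ∈ ℝ^{d−1} satisfy |ηⁱ| ≤ 2 for all i, |ηⁱ·Mη^j| ≤ c K^{−1} for all i, j (including i = j), and the Gram determinant det( (ηⁱ·η^j)_{1 ≤ i,j ≤ k} ) ≥ K^{−1/2 + σ}, then every ω in the linear span of {η¹, …, η^k} with |ω| ≤ 2 satisfies |ω·Mω| ≤ C K^{−σ}. -/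
open MeasureTheory Metric

lemma Mform_sum_sum (d m k : ℕ) (a : Fin k → ℝ) (η : Fin k → EuclideanSpace ℝ (Fin (d - 1))) :
    Mform d m (∑ i, a i • η i) (∑ j, a j • η j)
      = ∑ i, ∑ j, a i * a j * Mform d m (η i) (η j) := by
  have key : ∀ l : Fin (d - 1),
      (if (l : ℕ) < d - 1 - m then (1:ℝ) else -1) * ((∑ i, a i • η i) l) * ((∑ j, a j • η j) l)
        = ∑ i, ∑ j, a i * a j *
            ((if (l : ℕ) < d - 1 - m then (1:ℝ) else -1) * η i l * η j l) := by
    intro l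
    have hl : ((∑ i, a i • η i) l) = ∑ i, a i * η i l := by
      rw [WithLp.ofLp_sum, Finset.sum_apply]
      refine Finset.sum_congr rfl fun x _ => rfl
    rw [hl, mul_assoc, Finset.sum_mul_sum, Finset.mul_sum]
    refine Finset.sum_congr rfl fun i _ => ?_
    rw [Finset.mul_sum]
    refine Finset.sum_congr rfl fun j _ => ?_
    ring
  unfold Mform
  simp only [key]
  rw [Finset.sum_comm]
  refine Finset.sum_congr rfl fun i _ => ?_
  rw [Finset.sum_comm]
  refine Finset.sum_congr rfl fun j _ => ?_
  rw [Finset.mul_sum]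

theorem span_quadratic_bound (d m k : ℕ) (hm1 : 1 ≤ m) (hm2 : 2 * m ≤ d - 1)
    (hk1 : 1 ≤ k) (hk2 : k ≤ d - 1) (c σ : ℝ) (hc : 0 < c)
    (hσ1 : 0 < σ) (hσ2 : σ < 1 / 2) :
    ∃ C : ℝ, 0 < C ∧ ∀ K : ℝ, 1 ≤ K →
      ∀ η : Fin k → EuclideanSpace ℝ (Fin (d - 1)),
        (∀ i, ‖η i‖ ≤ 2) →
        (∀ i j, |Mform d m (η i) (η j)| ≤ c * K⁻¹) →
        K ^ (-(1 / 2 : ℝ) + σ) ≤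
          (Matrix.of fun i j : Fin k => (inner ℝ (η i) (η j) : ℝ)).det →
        ∀ ω ∈ Submodule.span ℝ (Set.range η), ‖ω‖ ≤ 2 →
          |Mform d m ω ω| ≤ C * K ^ (-σ) := by
  classical
  set B : ℝ := (k.factorial : ℝ) * 4 ^ k with hB
  have hB0 : 0 < B := by positivity
  set A₀ : ℝ := (k : ℝ) * B * 4 with hA₀
  have hA₀0 : 0 < A₀ := by
    have : (1:ℝ) ≤ (k:ℝ) := by exact_mod_cast hk1
    positivity
  refine ⟨(k : ℝ) ^ 2 * A₀ ^ 2 * c, by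
    have : (1:ℝ) ≤ (k:ℝ) := by exact_mod_cast hk1
    positivity, ?_⟩
  intro K hK η hnorm hM hdet ω hω hωnorm
  have hK0 : (0:ℝ) < K := lt_of_lt_of_le one_pos hK
  obtain ⟨a, ha⟩ := (Submodule.mem_span_range_iff_exists_fun ℝ).mp hω
  set G : Matrix (Fin k) (Fin k) ℝ :=
    Matrix.of fun i j : Fin k => (inner ℝ (η i) (η j) : ℝ) with hG
  have hdetpos : 0 < G.det := lt_of_lt_of_le (Real.rpow_pos_of_pos hK0 _) hdet
  set b : Fin k → ℝ := fun i => (inner ℝ (η i) ω : ℝ) with hb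
  -- entries bounded by 4
  have hGent : ∀ i j, |G i j| ≤ 4 := by
    intro i j
    calc |G i j| ≤ ‖η i‖ * ‖η j‖ := by
          simp only [hG, Matrix.of_apply]; exact abs_real_inner_le_norm _ _
    _ ≤ 2 * 2 := by
        exact mul_le_mul (hnorm i) (hnorm j) (norm_nonneg _) (by norm_num)
    _ = 4 := by norm_num
  have hbent : ∀ j, |b j| ≤ 4 := by
    intro j
    calc |b j| ≤ ‖η j‖ * ‖ω‖ := abs_real_inner_le_norm (η j) ω
    _ ≤ 2 * 2 := mul_le_mul (hnorm j) hωnorm (norm_nonneg _) (by norm_num)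
    _ = 4 := by norm_num
  -- adjugate entries bounded by B
  have hadj : ∀ i j, |G.adjugate i j| ≤ B := by
    intro i j
    rw [Matrix.adjugate_apply]
    have hent : ∀ p q, |(G.updateRow j (Pi.single i 1)) p q| ≤ 4 := by
      intro p q
      rw [Matrix.updateRow_apply]
      split
      · rcases eq_or_ne q i with rfl | hq
        · simp
        · simp [Pi.single_apply, hq.symm]
      · exact hGent p q
    have := Matrix.det_le (abv := AbsoluteValue.abs) (x := (4:ℝ)) hent
    simpa [hB, Fintype.card_fin, nsmul_eq_mul] using this
  -- G.mulVec a = b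
  have hGa : G.mulVec a = b := by
    funext i
    simp only [Matrix.mulVec, dotProduct, hG, Matrix.of_apply, hb]
    rw [← ha, inner_sum]
    refine Finset.sum_congr rfl fun j _ => ?_
    rw [real_inner_smul_right]
    ring
  -- a in terms of adjugate
  have haeq : ∀ i, a i = (G.det)⁻¹ * ((G.adjugate.mulVec b) i) := by
    have h1 : G.adjugate.mulVec (G.mulVec a) = G.det • a := by
      rw [Matrix.mulVec_mulVec, Matrix.adjugate_mul]
      simp [Matrix.smul_mulVec]
    rw [hGa] at h1
    intro i
    have := congrFun h1 i
    simp only [Pi.smul_apply, smul_eq_mul] at this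
    field_simp [ne_of_gt hdetpos]
    linarith [this]
  -- bound on a
  have hdinv : (G.det)⁻¹ ≤ K ^ ((1:ℝ)/2 - σ) := by
    have h1 : (K ^ (-(1 / 2 : ℝ) + σ))⁻¹ = K ^ ((1:ℝ)/2 - σ) := by
      rw [← Real.rpow_neg (le_of_lt hK0)]
      ring_nf
    rw [← h1]
    exact inv_anti₀ (Real.rpow_pos_of_pos hK0 _) hdet
  have hacoef : ∀ i, |a i| ≤ K ^ ((1:ℝ)/2 - σ) * A₀ := by
    intro i
    rw [haeq i, abs_mul, abs_inv, abs_of_pos hdetpos]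
    have h2 : |(G.adjugate.mulVec b) i| ≤ A₀ := by
      rw [Matrix.mulVec, dotProduct]
      calc |∑ j, G.adjugate i j * b j| ≤ ∑ j, |G.adjugate i j * b j| :=
            Finset.abs_sum_le_sum_abs _ _
      _ ≤ ∑ _j : Fin k, B * 4 := by
          refine Finset.sum_le_sum fun j _ => ?_
          rw [abs_mul]
          exact mul_le_mul (hadj i j) (hbent j) (abs_nonneg _) (le_of_lt hB0)
      _ = A₀ := by simp [hA₀]; ring
    exact mul_le_mul hdinv h2 (abs_nonneg _) (le_of_lt (Real.rpow_pos_of_pos hK0 _))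
  -- expand Mform
  rw [← ha, Mform_sum_sum]
  set A : ℝ := K ^ ((1:ℝ)/2 - σ) * A₀ with hA
  have hA0 : 0 < A := mul_pos (Real.rpow_pos_of_pos hK0 _) hA₀0
  have hterm : ∀ i j : Fin k, |a i * a j * Mform d m (η i) (η j)| ≤ A * A * (c * K⁻¹) := by
    intro i j
    rw [abs_mul, abs_mul]
    have h1 : |a i| * |a j| ≤ A * A :=
      mul_le_mul (hacoef i) (hacoef j) (abs_nonneg _) (le_of_lt hA0)
    exact mul_le_mul h1 (hM i j) (abs_nonneg _) (by positivity)
  calc |∑ i, ∑ j, a i * a j * Mform d m (η i) (η j)|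
      ≤ ∑ i, ∑ j, |a i * a j * Mform d m (η i) (η j)| := by
        refine le_trans (Finset.abs_sum_le_sum_abs _ _) ?_
        exact Finset.sum_le_sum fun i _ => Finset.abs_sum_le_sum_abs _ _
    _ ≤ ∑ _i : Fin k, ∑ _j : Fin k, A * A * (c * K⁻¹) := by
        exact Finset.sum_le_sum fun i _ => Finset.sum_le_sum fun j _ => hterm i j
    _ = (k : ℝ)^2 * (A * A * (c * K⁻¹)) := by
        simp [Finset.sum_const]; ring
    _ ≤ (k : ℝ) ^ 2 * A₀ ^ 2 * c * K ^ (-σ) := by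
        have hexp : A * A * (c * K⁻¹) = A₀ ^ 2 * c * K ^ (-(2*σ)) := by
          rw [hA]
          rw [show K⁻¹ = K ^ (-1 : ℝ) by rw [Real.rpow_neg_one]]
          rw [show (-(2*σ) : ℝ) = ((1:ℝ)/2 - σ) + (((1:ℝ)/2 - σ) + (-1)) by ring]
          rw [Real.rpow_add hK0, Real.rpow_add hK0]
          ring
        rw [hexp]
        have hle : K ^ (-(2*σ)) ≤ K ^ (-σ) :=
          Real.rpow_le_rpow_of_exponent_le hK (by linarith)
        have h0 : (0:ℝ) ≤ (k:ℝ)^2 * A₀^2 * c := by positivity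
        calc (k:ℝ)^2 * (A₀ ^ 2 * c * K ^ (-(2*σ)))
            = ((k:ℝ)^2 * A₀^2 * c) * K ^ (-(2*σ)) := by ring
          _ ≤ ((k:ℝ)^2 * A₀^2 * c) * K ^ (-σ) := by
              exact mul_le_mul_of_nonneg_left hle h0
end

section
/- (Normalizing map for strongly separated caps.) Let c > 0. There exist a constant C_d > 0 depending only on d and K₀ ≥ 1 depending on d and c such that for all K ≥ K₀ the following holds. Suppose ξ* ∈ ℝ^{d−1} has the form ξ* = (ξ₁, 0, …, 0, ξ_{d−m}, …, ξ_{d−1}), with |ξ*| ≤ 2, |ξ*|² ≥ c K^{−1}, and ξ*·Mξ* ≥ c K^{−1}. Then: (a) ξ₁² ≥ c K^{−1}; (b) the unique linear map S : ℝ^{d−1} → ℝ^{d−1} with S ξ* = e₁ and S e_j = e_j for j = 2, …, d−1 (where e₁, …, e_{d−1} is the standard basis) has operator norm ‖S‖ ≤ C_d c^{−1/2} K^{1/2}; and (c) for all ξ, ξ̄ in the ball of radius K^{−1} centered at ξ* and all η, η̄ in the ball of radius K^{−1} centered at the origin, |M(Sξ − Sη)·(Sξ̄ − Sη̄)| ≥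 1/2. -/
open MeasureTheory Metric RealInnerProductSpace

lemma mform_sub_left (d m : ℕ) (a b c : EuclideanSpace ℝ (Fin (d-1))) :
    Mform d m (a - b) c = Mform d m a c - Mform d m b c := by
  unfold Mform
  rw [← Finset.sum_sub_distrib]
  refine Finset.sum_congr rfl fun i _ => ?_
  have h : (a - b) i = a i - b i := rfl
  rw [h]; ring

lemma mform_sub_right (d m : ℕ) (a b c : EuclideanSpace ℝ (Fin (d-1))) :
    Mform d m a (b - c) = Mform d m a b - Mform d m a c := by
  unfold Mform
  rw [← Finset.sum_sub_distrib]
  refine Finset.sum_congr rfl fun i _ => ?_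
  have h : (b - c) i = b i - c i := rfl
  rw [h]; ring

lemma mform_abs_le (d m : ℕ) (ξ η : EuclideanSpace ℝ (Fin (d-1))) :
    |Mform d m ξ η| ≤ ‖ξ‖ * ‖η‖ := by
  set a : EuclideanSpace ℝ (Fin (d-1)) := WithLp.toLp 2 (fun i => |ξ i|) with ha
  set b : EuclideanSpace ℝ (Fin (d-1)) := WithLp.toLp 2 (fun i => |η i|) with hb
  have hna : ‖a‖ = ‖ξ‖ := by
    rw [EuclideanSpace.norm_eq, EuclideanSpace.norm_eq]
    congr 1
    refine Finset.sum_congr rfl fun i _ => ?_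
    simp [ha, abs_abs]
  have hnb : ‖b‖ = ‖η‖ := by
    rw [EuclideanSpace.norm_eq, EuclideanSpace.norm_eq]
    congr 1
    refine Finset.sum_congr rfl fun i _ => ?_
    simp [hb, abs_abs]
  have h1 : |Mform d m ξ η| ≤ ⟪a, b⟫ := by
    unfold Mform
    refine (Finset.abs_sum_le_sum_abs _ _).trans ?_
    rw [PiLp.inner_apply]
    refine Finset.sum_le_sum fun i _ => ?_
    have : (⟪a i, b i⟫) = |ξ i| * |η i| := by simp [ha, hb, mul_comm]
    rw [this, abs_mul, abs_mul]
    rcases lt_or_ge ((i:ℕ)) (d-1-m) with h | h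
    · simp [h]
    · simp [not_lt.2 h]
  calc |Mform d m ξ η| ≤ ⟪a, b⟫ := h1
    _ ≤ ‖a‖ * ‖b‖ := real_inner_le_norm a b
    _ = ‖ξ‖ * ‖η‖ := by rw [hna, hnb]

lemma coord_abs_le_norm {n : ℕ} (x : EuclideanSpace ℝ (Fin n)) (i : Fin n) :
    |x i| ≤ ‖x‖ := by
  rw [EuclideanSpace.norm_eq]
  rw [← Real.sqrt_sq (abs_nonneg (x i))]
  apply Real.sqrt_le_sqrt
  rw [sq_abs]
  calc x i ^ 2 = ‖x i‖ ^ 2 := by rw [Real.norm_eq_abs, sq_abs]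
    _ ≤ ∑ j, ‖x j‖ ^ 2 := Finset.single_le_sum (f := fun j => ‖x j‖ ^ 2) (fun j _ => by positivity) (Finset.mem_univ i)


set_option maxHeartbeats 1000000 in
theorem normalizing_map (d m : ℕ) (hd : 3 ≤ d) (hm1 : 1 ≤ m) (hm2 : 2 * m ≤ d - 1) :
    ∃ Cd : ℝ, 0 < Cd ∧ ∀ c : ℝ, 0 < c →
      ∃ K₀ : ℝ, 1 ≤ K₀ ∧ ∀ K : ℝ, K₀ ≤ K →
      ∀ ξs : EuclideanSpace ℝ (Fin (d - 1)),
        (∀ i : Fin (d - 1), (i : ℕ) ≠ 0 → (i : ℕ) < d - 1 - m → ξs i = 0) →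
        ‖ξs‖ ≤ 2 → c * K⁻¹ ≤ ‖ξs‖ ^ 2 → c * K⁻¹ ≤ Mform d m ξs ξs →
        (c * K⁻¹ ≤ (ξs ⟨0, by omega⟩) ^ 2) ∧
        ∃ S : EuclideanSpace ℝ (Fin (d - 1)) →L[ℝ] EuclideanSpace ℝ (Fin (d - 1)),
          (S ξs = EuclideanSpace.single ⟨0, by omega⟩ 1 ∧
            ∀ j : Fin (d - 1), (j : ℕ) ≠ 0 →
              S (EuclideanSpace.single j 1) = EuclideanSpace.single j 1) ∧
          (∀ S' : EuclideanSpace ℝ (Fin (d - 1)) →L[ℝ] EuclideanSpace ℝ (Fin (d - 1)),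
            (S' ξs = EuclideanSpace.single ⟨0, by omega⟩ 1 ∧
              ∀ j : Fin (d - 1), (j : ℕ) ≠ 0 →
                S' (EuclideanSpace.single j 1) = EuclideanSpace.single j 1) →
            S' = S) ∧
          ‖S‖ ≤ Cd * c ^ (-(1 / 2 : ℝ)) * K ^ ((1 : ℝ) / 2) ∧
          (∀ ξ ∈ ball ξs K⁻¹, ∀ ξ' ∈ ball ξs K⁻¹,
           ∀ η ∈ ball (0 : EuclideanSpace ℝ (Fin (d - 1))) K⁻¹,
           ∀ η' ∈ ball (0 : EuclideanSpace ℝ (Fin (d - 1))) K⁻¹,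
            1 / 2 ≤ |Mform d m (S ξ - S η) (S ξ' - S η')|) := by
  refine ⟨5, by norm_num, fun c hc => ⟨max 1 (10000 / c), le_max_left _ _,
    fun K hK ξs hsupp hnorm hlow hM => ?_⟩⟩
  have hK1 : (1:ℝ) ≤ K := le_trans (le_max_left _ _) hK
  have hKpos : (0:ℝ) < K := by linarith
  have hcK : (10000:ℝ) ≤ c * K := by
    have h := le_trans (le_max_right 1 (10000 / c)) hK
    rw [div_le_iff₀ hc] at h; linarith
  set i0 : Fin (d-1) := ⟨0, by omega⟩ with hi0
  have h0lt : (0:ℕ) < d - 1 - m := by omega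
  -- part (a)
  have key : Mform d m ξs ξs ≤ ξs i0 ^ 2 := by
    unfold Mform
    have hle : ∀ i ∈ (Finset.univ : Finset (Fin (d-1))),
        (if (i:ℕ) < d-1-m then (1:ℝ) else -1) * ξs i * ξs i
          ≤ (if i = i0 then ξs i0 ^ 2 else 0) := by
      intro i _
      by_cases h0 : i = i0
      · rw [h0, if_pos rfl, if_pos (show ((i0 : Fin (d-1)):ℕ) < d-1-m from h0lt)]
        rw [one_mul, sq]
      · have hival : (i:ℕ) ≠ 0 := fun h => h0 (Fin.val_injective h)
        by_cases h1 : (i:ℕ) < d-1-m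
        · rw [hsupp i hival h1]; simp [h0]
        · simp only [if_neg h1, if_neg h0]
          nlinarith [sq_nonneg (ξs i)]
    calc ∑ i : Fin (d-1), (if (i:ℕ) < d-1-m then (1:ℝ) else -1) * ξs i * ξs i
        ≤ ∑ i : Fin (d-1), (if i = i0 then ξs i0 ^ 2 else 0) := Finset.sum_le_sum hle
      _ = ξs i0 ^ 2 := by rw [Finset.sum_ite_eq' Finset.univ i0]; simp
  have ha : c * K⁻¹ ≤ ξs i0 ^ 2 := le_trans hM key
  refine ⟨ha, ?_⟩
  have hcKinv : (0:ℝ) < c * K⁻¹ := mul_pos hc (inv_pos.2 hKpos)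
  have hx2pos : 0 < ξs i0 ^ 2 := lt_of_lt_of_le hcKinv ha
  have hxne : ξs i0 ≠ 0 := by intro h; rw [h] at hx2pos; simp at hx2pos
  have hxabs : 0 < |ξs i0| := abs_pos.2 hxne
  set x1 := ξs i0 with hx1
  set e1 : EuclideanSpace ℝ (Fin (d-1)) := EuclideanSpace.single i0 1 with he1
  set u : EuclideanSpace ℝ (Fin (d-1)) := x1⁻¹ • (e1 - ξs) with hu
  set S : EuclideanSpace ℝ (Fin (d-1)) →L[ℝ] EuclideanSpace ℝ (Fin (d-1)) :=
    ContinuousLinearMap.id ℝ _ + ((innerSL ℝ) e1).smulRight u with hSdef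
  have hSapp : ∀ x, S x = x + (x i0) • u := by
    intro x
    rw [hSdef]
    simp [ContinuousLinearMap.smulRight_apply, he1, EuclideanSpace.inner_single_left]
  have hSxi : S ξs = e1 := by
    rw [hSapp, hu, smul_smul, mul_inv_cancel₀ hxne, one_smul]
    abel
  have hSj : ∀ j : Fin (d-1), (j:ℕ) ≠ 0 →
      S (EuclideanSpace.single j 1) = EuclideanSpace.single j 1 := by
    intro j hj
    rw [hSapp]
    have : (EuclideanSpace.single j (1:ℝ)) i0 = 0 := by
      rw [EuclideanSpace.single_apply, if_neg]
      intro h; exact hj (by rw [← h])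
    rw [this, zero_smul, add_zero]
  -- norm bounds
  have hx1le2 : |x1| ≤ 2 := le_trans (coord_abs_le_norm ξs i0) hnorm
  have hune : ‖e1 - ξs‖ ≤ 3 := by
    calc ‖e1 - ξs‖ ≤ ‖e1‖ + ‖ξs‖ := norm_sub_le _ _
      _ ≤ 1 + 2 := by rw [he1, EuclideanSpace.norm_single]; simp [hnorm]
      _ = 3 := by norm_num
  have hunorm : ‖u‖ ≤ 3 / |x1| := by
    rw [hu, norm_smul, norm_inv, Real.norm_eq_abs]
    rw [div_eq_inv_mul]
    exact mul_le_mul_of_nonneg_left hune (by positivity)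
  have hS5 : ‖S‖ ≤ 5 / |x1| := by
    have h1 : ‖S‖ ≤ ‖ContinuousLinearMap.id ℝ (EuclideanSpace ℝ (Fin (d-1)))‖
        + ‖((innerSL ℝ) e1).smulRight u‖ := by rw [hSdef]; exact norm_add_le _ _
    have h2 : ‖((innerSL ℝ) e1).smulRight u‖ = ‖(innerSL ℝ) e1‖ * ‖u‖ :=
      ContinuousLinearMap.norm_smulRight_apply _ _
    have h3 : ‖(innerSL ℝ) e1‖ = ‖e1‖ := innerSL_apply_norm ℝ e1
    have h4 : ‖e1‖ = 1 := by rw [he1, EuclideanSpace.norm_single]; norm_num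
    have h5 : ‖((innerSL ℝ) e1).smulRight u‖ ≤ 3 / |x1| := by
      rw [h2]
      calc ‖(innerSL ℝ) e1‖ * ‖u‖ ≤ 1 * (3 / |x1|) := by
            apply mul_le_mul (le_of_eq (h3.trans h4)) hunorm (norm_nonneg _) (by norm_num)
        _ = 3 / |x1| := one_mul _
    have h6 : (1:ℝ) ≤ 2 / |x1| := by
      rw [le_div_iff₀ hxabs]; linarith
    calc ‖S‖ ≤ ‖ContinuousLinearMap.id ℝ (EuclideanSpace ℝ (Fin (d-1)))‖
        + ‖((innerSL ℝ) e1).smulRight u‖ := h1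
      _ ≤ 1 + 3 / |x1| := add_le_add ContinuousLinearMap.norm_id_le h5
      _ ≤ 2 / |x1| + 3 / |x1| := by linarith
      _ = 5 / |x1| := by ring
  have hsqx : Real.sqrt c ≤ |x1| * Real.sqrt K := by
    have h1 : c ≤ x1 ^ 2 * K := by
      rw [mul_comm c K⁻¹] at ha
      calc c = K⁻¹ * c * K := by field_simp
        _ ≤ x1 ^ 2 * K := by nlinarith
    calc Real.sqrt c ≤ Real.sqrt (x1 ^ 2 * K) := Real.sqrt_le_sqrt h1
      _ = |x1| * Real.sqrt K := by
          rw [Real.sqrt_mul (sq_nonneg x1), Real.sqrt_sq_eq_abs]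
  have hsc : (0:ℝ) < Real.sqrt c := Real.sqrt_pos.2 hc
  have hsK : (0:ℝ) < Real.sqrt K := Real.sqrt_pos.2 hKpos
  have hscK : (100:ℝ) ≤ Real.sqrt c * Real.sqrt K := by
    rw [← Real.sqrt_mul hc.le]
    rw [show (100:ℝ) = Real.sqrt 10000 by
      rw [show (10000:ℝ) = 100 ^ 2 by norm_num, Real.sqrt_sq (by norm_num)]]
    exact Real.sqrt_le_sqrt hcK
  have hx1K : (100:ℝ) ≤ |x1| * K := by
    have h1 : Real.sqrt c * Real.sqrt K ≤ (|x1| * Real.sqrt K) * Real.sqrt K :=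
      mul_le_mul_of_nonneg_right hsqx hsK.le
    rw [mul_assoc, Real.mul_self_sqrt hKpos.le] at h1
    linarith
  refine ⟨S, ⟨hSxi, hSj⟩, ?_, ?_, ?_⟩
  · -- uniqueness
    intro S' ⟨hS'1, hS'2⟩
    have hdecomp : ∀ x : EuclideanSpace ℝ (Fin (d-1)),
        ∑ j, (x j) • EuclideanSpace.single j (1:ℝ) = x := by
      intro x
      have h := (EuclideanSpace.basisFun (Fin (d-1)) ℝ).sum_repr x
      simpa [EuclideanSpace.basisFun_apply, EuclideanSpace.basisFun_repr] using h
    have huniq : ∀ T : EuclideanSpace ℝ (Fin (d-1)) →L[ℝ] EuclideanSpace ℝ (Fin (d-1)),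
        T ξs = e1 → (∀ j : Fin (d-1), (j:ℕ) ≠ 0 →
          T (EuclideanSpace.single j 1) = EuclideanSpace.single j 1) →
        T (EuclideanSpace.single i0 1) = x1⁻¹ •
          (e1 - ∑ j ∈ Finset.univ.erase i0, (ξs j) • EuclideanSpace.single j (1:ℝ)) := by
      intro T hT1 hT2
      have h1 : e1 = x1 • T (EuclideanSpace.single i0 1)
          + ∑ j ∈ Finset.univ.erase i0, (ξs j) • EuclideanSpace.single j (1:ℝ) := by
        conv_lhs => rw [← hT1, ← hdecomp ξs]
        rw [map_sum, ← Finset.add_sum_erase _ _ (Finset.mem_univ i0), _root_.map_smul]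
        congr 1
        refine Finset.sum_congr rfl fun j hj => ?_
        have hj0 : (j:ℕ) ≠ 0 := by
          intro h
          exact (Finset.mem_erase.1 hj).1 (Fin.ext h)
        rw [_root_.map_smul, hT2 j hj0]
      have h2 : x1 • T (EuclideanSpace.single i0 1)
          = e1 - ∑ j ∈ Finset.univ.erase i0, (ξs j) • EuclideanSpace.single j (1:ℝ) := by
        rw [h1]; abel
      rw [← h2, inv_smul_smul₀ hxne]
    apply ContinuousLinearMap.coe_injective
    apply Module.Basis.ext (EuclideanSpace.basisFun (Fin (d-1)) ℝ).toBasis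
    intro i
    rw [OrthonormalBasis.coe_toBasis, EuclideanSpace.basisFun_apply]
    by_cases hi : (i:ℕ) = 0
    · have : i = i0 := Fin.ext hi
      rw [this]
      show S' (EuclideanSpace.single i0 1) = S (EuclideanSpace.single i0 1)
      rw [huniq S' hS'1 hS'2, huniq S hSxi hSj]
    · show S' (EuclideanSpace.single i 1) = S (EuclideanSpace.single i 1)
      rw [hS'2 i hi, hSj i hi]
  · -- norm bound
    have hrw : (5:ℝ) * c ^ (-(1 / 2 : ℝ)) * K ^ ((1 : ℝ) / 2)
        = 5 * (Real.sqrt c)⁻¹ * Real.sqrt K := by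
      rw [Real.rpow_neg hc.le, Real.sqrt_eq_rpow, Real.sqrt_eq_rpow]
    rw [hrw]
    refine hS5.trans ?_
    rw [div_le_iff₀ hxabs]
    have h7 := mul_le_mul_of_nonneg_left hsqx (le_of_lt (inv_pos.2 hsc))
    rw [inv_mul_cancel₀ hsc.ne'] at h7
    calc (5:ℝ) = 5 * 1 := by ring
      _ ≤ 5 * ((Real.sqrt c)⁻¹ * (|x1| * Real.sqrt K)) := by linarith
      _ = 5 * (Real.sqrt c)⁻¹ * Real.sqrt K * |x1| := by ring
  · intro ξ hξ ξ' hξ' η hη η' hη'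
    rw [mem_ball, dist_eq_norm] at hξ hξ'
    rw [mem_ball, dist_eq_norm, sub_zero] at hη hη'
    have hKinv : (0:ℝ) < K⁻¹ := inv_pos.2 hKpos
    have h1e : ‖e1‖ = 1 := by rw [he1, EuclideanSpace.norm_single]; norm_num
    have hbound : ∀ a b : EuclideanSpace ℝ (Fin (d-1)), ‖a - ξs‖ < K⁻¹ → ‖b‖ < K⁻¹ →
        ‖S a - S b - e1‖ ≤ 1/10 := by
      intro a b ha' hb'
      have heq : S a - S b - e1 = S (a - b - ξs) := by rw [map_sub, map_sub, hSxi]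
      rw [heq]
      have hle' : ‖a - b - ξs‖ ≤ 2 * K⁻¹ := by
        have habel : a - b - ξs = (a - ξs) - b := by abel
        rw [habel]
        calc ‖(a - ξs) - b‖ ≤ ‖a - ξs‖ + ‖b‖ := norm_sub_le _ _
          _ ≤ 2 * K⁻¹ := by linarith
      calc ‖S (a - b - ξs)‖ ≤ ‖S‖ * ‖a - b - ξs‖ := S.le_opNorm _
        _ ≤ (5 / |x1|) * (2 * K⁻¹) :=
            mul_le_mul hS5 hle' (norm_nonneg _) (by positivity)
        _ = 10 / (|x1| * K) := by
            rw [div_mul_eq_mul_div, div_eq_div_iff hxabs.ne' (by positivity : (|x1| * K) ≠ 0)]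
            field_simp
            ring
        _ ≤ 1/10 := by
            rw [div_le_div_iff₀ (by positivity) (by norm_num)]
            linarith
    have hAe := hbound ξ η hξ hη
    have hBe := hbound ξ' η' hξ' hη'
    have hMe : Mform d m e1 e1 = 1 := by
      unfold Mform
      rw [Finset.sum_eq_single i0]
      · rw [if_pos (show ((i0 : Fin (d-1)):ℕ) < d-1-m from h0lt)]
        simp [he1]
      · intro j _ hj
        have hz : e1 j = 0 := by rw [he1, EuclideanSpace.single_apply, if_neg hj]
        rw [hz]; ring
      · intro h; exact absurd (Finset.mem_univ i0) h
    set A := S ξ - S η with hA'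
    set B := S ξ' - S η' with hB'
    have hBn : ‖B‖ ≤ 11/10 := by
      calc ‖B‖ = ‖(B - e1) + e1‖ := by rw [sub_add_cancel]
        _ ≤ ‖B - e1‖ + ‖e1‖ := norm_add_le _ _
        _ ≤ 1/10 + 1 := add_le_add hBe h1e.le
        _ = 11/10 := by norm_num
    have hdiff : Mform d m A B - 1 = Mform d m (A - e1) B + Mform d m e1 (B - e1) := by
      rw [mform_sub_left d m A e1 B, mform_sub_right d m e1 B e1, hMe]; ring
    have habs : |Mform d m A B - 1| ≤ 21/100 := by
      rw [hdiff]
      calc |Mform d m (A-e1) B + Mform d m e1 (B-e1)|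
          ≤ |Mform d m (A-e1) B| + |Mform d m e1 (B-e1)| := abs_add_le _ _
        _ ≤ ‖A-e1‖*‖B‖ + ‖e1‖*‖B-e1‖ :=
            add_le_add (mform_abs_le d m _ _) (mform_abs_le d m _ _)
        _ ≤ (1/10)*(11/10) + 1*(1/10) := by
            apply add_le_add
            · exact mul_le_mul hAe hBn (norm_nonneg _) (by norm_num)
            · exact mul_le_mul h1e.le hBe (norm_nonneg _) (by norm_num)
        _ ≤ 21/100 := by norm_num
    have h8 := (abs_le.1 habs).1
    have h9 : (79:ℝ)/100 ≤ Mform d m A B := by linarith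
    exact le_trans (by norm_num) (le_trans h9 (le_abs_self _))
end
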